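/- arXiv:math/9709214 — 3 statements merged into one kernel-verified Lean document; each statement's English description precedes it below -/
import Mathlib

section
/- Let $k \ge 1$ be an integer and $p = 2k$. If $f_1, \dots, f_n \in L_p[0,1]$ are independent symmetric random variables and $f = \sum_{j=1}^n f_j$, then $\|f\|_p^p = \sum_{k_1 + \cdots + k_n = k,\; k_j \ge 0} \frac{(2k)!}{(2k_1)! \cdots (2k_n)!} \prod_{j=1}^n \|f_j\|_{2k_j}^{2k_j}$, with the convention $\|f_j\|_0^0 = 1$. In particular, $\|f\|_p$ depends only on the values $\|f_j\|_{2m}$ for $1 \le m \le k$, $1 \le j \le n$. -/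
open MeasureTheory ProbabilityTheory Finset
open scoped ENNReal NNReal

/-- The probability space `[0,1]` with Lebesgue measure. -/
noncomputable def mu01 : MeasureTheory.Measure ℝ :=
  MeasureTheory.volume.restrict (Set.Icc (0 : ℝ) 1)

instance : IsProbabilityMeasure mu01 := by
  constructor
  rw [mu01, Measure.restrict_apply_univ]
  simp

/-- Odd moments of a symmetric random variable vanish. -/
lemma odd_moment_zero {g : ℝ → ℝ} (hg : Measurable g)
    (hs : mu01.map g = mu01.map (fun x => - g x)) {m : ℕ} (hm : Odd m) :
    ∫ x, g x ^ m ∂mu01 = 0 := by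
  have hpm : AEStronglyMeasurable (fun y : ℝ => y ^ m) (mu01.map g) :=
    (measurable_id.pow_const m).aestronglyMeasurable
  have h1 : ∫ y, y ^ m ∂(mu01.map g) = ∫ x, g x ^ m ∂mu01 :=
    integral_map hg.aemeasurable hpm
  have hpm' : AEStronglyMeasurable (fun y : ℝ => y ^ m) (mu01.map (fun x => - g x)) := by
    rw [← hs]; exact hpm
  have h2 : ∫ y, y ^ m ∂(mu01.map (fun x => - g x)) = ∫ x, (- g x) ^ m ∂mu01 :=
    integral_map hg.neg.aemeasurable hpm'
  have h3 : ∫ x, (- g x) ^ m ∂mu01 = - ∫ x, g x ^ m ∂mu01 := by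
    rw [← integral_neg]
    congr 1
    funext x
    rw [hm.neg_pow]
  have : ∫ x, g x ^ m ∂mu01 = - ∫ x, g x ^ m ∂mu01 := by
    conv_lhs => rw [← h1]
    rw [hs, h2, h3]
  linarith

/-- A power `g ^ m` with `m ≤ 2k` of an `L^{2k}` function is integrable. -/
lemma integrable_pow_of_memLp {k : ℕ} {g : ℝ → ℝ} (hg : Measurable g)
    (hLp : MemLp g ((2 * k : ℕ) : ℝ≥0∞) mu01) {m : ℕ} (hm : m ≤ 2 * k) :
    Integrable (fun x => g x ^ m) mu01 := by
  rcases Nat.eq_zero_or_pos m with rfl | hm0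
  · simpa using integrable_const (1 : ℝ)
  have h1 : MemLp g ((m : ℕ) : ℝ≥0∞) mu01 :=
    hLp.mono_exponent (by exact_mod_cast hm)
  have h2 := h1.norm_rpow (by exact_mod_cast Nat.cast_ne_zero.mpr hm0.ne')
    (by simp)
  have h3 : Integrable (fun x => ‖g x‖ ^ (m : ℝ)) mu01 := by
    have := h2.integrable le_rfl
    simpa using this
  refine h3.mono' (hg.pow_const m).aestronglyMeasurable ?_
  filter_upwards with x
  rw [Real.norm_eq_abs, abs_pow, ← Real.rpow_natCast |g x| m]
  exact le_of_eq (by rw [Real.norm_eq_abs])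

/-- Product of finitely many independent integrable functions: integrability and
factorization of the integral. -/
lemma indep_prod_integral {n : ℕ} {g : Fin n → ℝ → ℝ}
    (hmeas : ∀ j, Measurable (g j))
    (hint : ∀ j, Integrable (g j) mu01)
    (hindep : iIndepFun g mu01) (s : Finset (Fin n)) :
    Integrable (fun x => ∏ j ∈ s, g j x) mu01 ∧
    ∫ x, ∏ j ∈ s, g j x ∂mu01 = ∏ j ∈ s, ∫ x, g j x ∂mu01 := by
  classical
  induction s using Finset.cons_induction with
  | empty => simp
  | cons a s ha ih =>
    have hIndep : IndepFun (∏ j ∈ s, g j) (g a) mu01 :=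
      hindep.indepFun_finsetProd_of_notMem hmeas ha
    have hps : (∏ j ∈ s, g j) = fun x => ∏ j ∈ s, g j x := by
      funext x; simp
    have hIntProd : Integrable (fun x => ∏ j ∈ s, g j x) mu01 := ih.1
    have hmul : Integrable ((∏ j ∈ s, g j) * g a) mu01 :=
      hIndep.integrable_mul (hps ▸ hIntProd) (hint a)
    have heq : (fun x => ∏ j ∈ Finset.cons a s ha, g j x)
        = (∏ j ∈ s, g j) * g a := by
      funext x
      simp [Finset.prod_insert ha, Finset.prod_apply, mul_comm]
    constructor
    · rw [heq]; exact hmul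
    · have := hIndep.integral_mul_eq_mul_integral (hps ▸ hIntProd.aestronglyMeasurable)
        (hint a).aestronglyMeasurable
      calc ∫ x, ∏ j ∈ Finset.cons a s ha, g j x ∂mu01
          = ∫ x, ((∏ j ∈ s, g j) * g a) x ∂mu01 := by rw [← heq]
        _ = (∫ x, (∏ j ∈ s, g j) x ∂mu01) * ∫ x, g a x ∂mu01 := this
        _ = (∏ j ∈ s, ∫ x, g j x ∂mu01) * ∫ x, g a x ∂mu01 := by
              rw [hps, ih.2]
        _ = ∏ j ∈ Finset.cons a s ha, ∫ x, g j x ∂mu01 := by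
              rw [Finset.prod_cons, mul_comm]

/-- **Lemma 1 (Lemma `sum`).** If `p = 2k` and `f₁, …, fₙ` are independent symmetric random
variables on `[0,1]`, then the `p`-th power of the `Lp`-norm of `f = ∑ fⱼ` is given by the
multinomial formula
`‖f‖_p^p = ∑_{k₁+⋯+kₙ=k} (2k)!/((2k₁)!⋯(2kₙ)!) ∏ⱼ ‖fⱼ‖_{2kⱼ}^{2kⱼ}`. -/
theorem sum_indep_symm_even_power (k n : ℕ) (hk : 1 ≤ k)
    (f : Fin n → ℝ → ℝ)
    (hmeas : ∀ j, Measurable (f j))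
    (hLp : ∀ j, MemLp (f j) ((2 * k : ℕ) : ℝ≥0∞) mu01)
    (hindep : iIndepFun f mu01)
    (hsymm : ∀ j, mu01.map (f j) = mu01.map (fun x => - f j x)) :
    ∫ x, (∑ j, f j x) ^ (2 * k) ∂mu01
      = ∑ c ∈ Finset.Nat.antidiagonalTuple n k,
          (Nat.multinomial Finset.univ (fun j => 2 * c j) : ℝ)
            * ∏ j, ∫ x, (f j x) ^ (2 * c j) ∂mu01 := by
  classical
  -- data for each exponent tuple
  have key : ∀ m : Fin n → ℕ, (∀ j, m j ≤ 2 * k) →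
      Integrable (fun x => ∏ j, f j x ^ m j) mu01 ∧
      ∫ x, ∏ j, f j x ^ m j ∂mu01 = ∏ j, ∫ x, f j x ^ m j ∂mu01 := by
    intro m hm
    have hindep' : iIndepFun
        (fun j => (fun y : ℝ => y ^ m j) ∘ f j) mu01 :=
      hindep.comp (fun j y => y ^ m j) (fun j => measurable_id.pow_const (m j))
    exact indep_prod_integral
      (fun j => (hmeas j).pow_const (m j))
      (fun j => integrable_pow_of_memLp (hmeas j) (hLp j) (hm j))
      hindep' Finset.univ
  have hmle : ∀ m : Fin n → ℕ, m ∈ Finset.piAntidiag Finset.univ (2 * k) →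
      ∀ j, m j ≤ 2 * k := by
    intro m hmem j
    rw [Finset.mem_piAntidiag] at hmem
    calc m j ≤ ∑ i, m i := Finset.single_le_sum (fun i _ => Nat.zero_le _) (Finset.mem_univ j)
      _ = 2 * k := hmem.1
  -- expand pointwise and swap integral with sum
  have hexp : ∫ x, (∑ j, f j x) ^ (2 * k) ∂mu01
      = ∑ m ∈ Finset.piAntidiag Finset.univ (2 * k),
          (Nat.multinomial Finset.univ m : ℝ) * ∏ j, ∫ x, f j x ^ m j ∂mu01 := by
    have hpt : ∀ x, (∑ j, f j x) ^ (2 * k)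
        = ∑ m ∈ Finset.piAntidiag Finset.univ (2 * k),
            (Nat.multinomial Finset.univ m : ℝ) * ∏ j, f j x ^ m j := fun x =>
      Finset.sum_pow_eq_sum_piAntidiag Finset.univ (fun j => f j x) (2 * k)
    simp_rw [hpt]
    rw [integral_finset_sum]
    · refine Finset.sum_congr rfl fun m hm => ?_
      rw [integral_const_mul, (key m (hmle m hm)).2]
    · intro m hm
      exact ((key m (hmle m hm)).1).const_mul _
  rw [hexp]
  -- terms with an odd exponent vanish
  rw [← Finset.sum_subset
      (Finset.filter_subset (fun m : Fin n → ℕ => ∀ j, Even (m j)) _)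
      (by
        intro m hm hnm
        rw [Finset.mem_filter] at hnm
        push_neg at hnm
        obtain ⟨j, hj⟩ := hnm hm
        rw [Nat.not_even_iff_odd] at hj
        have : ∫ x, f j x ^ m j ∂mu01 = 0 :=
          odd_moment_zero (hmeas j) (hsymm j) hj
        rw [Finset.prod_eq_zero (Finset.mem_univ j) this, mul_zero])]
  -- reindex by halving
  refine Finset.sum_nbij' (fun (m : Fin n → ℕ) (j : Fin n) => m j / 2) (fun (c : Fin n → ℕ) (j : Fin n) => 2 * c j) ?_ ?_ ?_ ?_ ?_
  · intro m hm
    rw [Finset.mem_filter, Finset.mem_piAntidiag] at hm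
    rw [Finset.Nat.mem_antidiagonalTuple]
    obtain ⟨⟨hsum, -⟩, heven⟩ := hm
    have : ∀ j, 2 * (m j / 2) = m j := fun j =>
      Nat.two_mul_div_two_of_even (heven j)
    have h2 : 2 * ∑ j, m j / 2 = 2 * k := by
      rw [Finset.mul_sum]
      simp_rw [this]
      exact hsum
    have h3 := Nat.eq_of_mul_eq_mul_left (show 0 < 2 by norm_num) h2
    simpa using h3
  · intro c hc
    rw [Finset.Nat.mem_antidiagonalTuple] at hc
    rw [Finset.mem_filter, Finset.mem_piAntidiag]
    exact ⟨⟨by rw [← Finset.mul_sum, hc], fun i _ => Finset.mem_univ i⟩,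
      fun j => even_two_mul _⟩
  · intro m hm
    rw [Finset.mem_filter] at hm
    funext j
    exact Nat.two_mul_div_two_of_even (hm.2 j)
  · intro c hc
    funext j
    show 2 * c j / 2 = c j
    omega
  · intro m hm
    rw [Finset.mem_filter] at hm
    have : ∀ j, 2 * (m j / 2) = m j := fun j =>
      Nat.two_mul_div_two_of_even (hm.2 j)
    simp_rw [this]
end

section
/- Let $k \ge 1$, fix $j \in \mathbb{N}$, and let $g_{j,1}, \dots, g_{j,k}$ be independent symmetric random variables on $[0,1]$ taking only the values $-1, 0, 1$, with $\int |g_{j,i}| = \mu_i$ for $i = 1, \dots, k$. Set $h_j = \sum_{i=1}^k g_{j,i}$. Then for every integer $m$ with $1 \le m \le k$: $\|h_j\|_{2m}^{2m} = H_m(\mu_1, \dots, \mu_k)$. -/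
open MeasureTheory ProbabilityTheory Finset
open scoped ENNReal NNReal

/-- `Ccoef m α = C_{m,α} = ∑_{n₁+⋯+n_α = m, nᵢ ≥ 1} (2m)! / ((2n₁)! ⋯ (2n_α)!)`. -/
def Ccoef (m α : ℕ) : ℕ :=
  ∑ c ∈ (Finset.Nat.antidiagonalTuple α m).filter (fun c => ∀ i, 1 ≤ c i),
    Nat.multinomial Finset.univ (fun i => 2 * c i)

/-- The polynomial `H_m(μ₁, …, μ_k) = ∑_{α=1}^m ∑_{S ⊆ {1,…,k}, |S| = α} C_{m,α} ∏_{i∈S} μᵢ`,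
with the convention `H₀ = 1` (the `α = 0` term of the sum below vanishes unless `m = 0`,
in which case it equals `1`). -/
def Hpoly (k m : ℕ) (μ : Fin k → ℝ) : ℝ :=
  ∑ α ∈ Finset.range (m + 1), ∑ S ∈ Finset.univ.powersetCard α,
    (Ccoef m α : ℝ) * ∏ i ∈ S, μ i

instance inst_s6 : IsProbabilityMeasure mu01 := by
  constructor
  simp [mu01, Real.volume_Icc]

lemma sum_orderIsoOfFin' {M : Type*} [AddCommMonoid M] {k : ℕ} (S : Finset (Fin k)) (f : Fin k → M) :
    ∑ j : Fin S.card, f (S.orderIsoOfFin rfl j) = ∑ i ∈ S, f i := by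
  rw [← Finset.sum_coe_sort S f]
  exact Fintype.sum_equiv (S.orderIsoOfFin rfl).toEquiv _ _ (fun _ => rfl)

lemma prod_orderIsoOfFin' {M : Type*} [CommMonoid M] {k : ℕ} (S : Finset (Fin k)) (f : Fin k → M) :
    ∏ j : Fin S.card, f (S.orderIsoOfFin rfl j) = ∏ i ∈ S, f i := by
  rw [← Finset.prod_coe_sort S f]
  exact Fintype.prod_equiv (S.orderIsoOfFin rfl).toEquiv _ _ (fun _ => rfl)

lemma multinomial_support_subset {k : ℕ} (f : Fin k → ℕ) (S : Finset (Fin k))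
    (h : ∀ i, f i ≠ 0 → i ∈ S) :
    Nat.multinomial Finset.univ f
      = Nat.multinomial Finset.univ (fun j : Fin S.card => f (S.orderIsoOfFin rfl j)) := by
  have hsum : ∑ i : Fin k, f i = ∑ i ∈ S, f i := by
    refine (Finset.sum_subset (Finset.subset_univ S) ?_).symm
    intro i _ hi
    by_contra h0
    exact hi (h i h0)
  have hprod : ∏ i : Fin k, (f i).factorial = ∏ i ∈ S, (f i).factorial := by
    refine (Finset.prod_subset (Finset.subset_univ S) ?_).symm
    intro i _ hi
    have : f i = 0 := by by_contra h0; exact hi (h i h0)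
    simp [this]
  unfold Nat.multinomial
  rw [hsum, hprod, ← sum_orderIsoOfFin' S f, ← prod_orderIsoOfFin' S (fun i => (f i).factorial)]

lemma coeff_fiber {k : ℕ} (m : ℕ) (S : Finset (Fin k)) :
    ∑ c ∈ (Finset.piAntidiag (Finset.univ : Finset (Fin k)) m).filter
        (fun c => Finset.univ.filter (fun i => c i ≠ 0) = S),
      Nat.multinomial Finset.univ (fun i => 2 * c i) = Ccoef m S.card := by
  set e := S.orderIsoOfFin rfl with he
  rw [Ccoef]
  refine Finset.sum_nbij' (fun c => fun j => c (e j))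
    (fun b => fun i => if h : i ∈ S then b (e.symm ⟨i, h⟩) else 0) ?_ ?_ ?_ ?_ ?_
  · -- forward membership
    intro c hc
    simp only [Finset.mem_filter, Finset.mem_piAntidiag] at hc
    obtain ⟨⟨hsum, -⟩, hsupp⟩ := hc
    have hS : ∀ i, c i ≠ 0 ↔ i ∈ S := by
      intro i
      constructor
      · intro hi; rw [← hsupp]; simp [hi]
      · intro hi; rw [← hsupp] at hi; simp at hi; exact hi
    refine Finset.mem_filter.2 ⟨?_, ?_⟩
    · rw [Finset.Nat.mem_antidiagonalTuple]
      rw [sum_orderIsoOfFin' S c]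
      rw [← hsum]
      refine Finset.sum_subset (Finset.subset_univ S) ?_
      intro i _ hi
      by_contra h0
      exact hi ((hS i).1 h0)
    · intro j
      show 1 ≤ c (e j)
      have h2 : (e j : Fin k) ∈ S := (e j).2
      have h3 := (hS (e j)).2 h2
      omega
  · -- backward membership
    intro b hb
    simp only [Finset.mem_filter, Finset.Nat.mem_antidiagonalTuple] at hb
    obtain ⟨hsum, hpos⟩ := hb
    simp only [Finset.mem_filter, Finset.mem_piAntidiag]
    refine ⟨⟨?_, by simp⟩, ?_⟩
    · have h1 : ∑ i : Fin k, (if h : i ∈ S then b (e.symm ⟨i, h⟩) else 0)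
          = ∑ i ∈ S, (if h : i ∈ S then b (e.symm ⟨i, h⟩) else 0) := by
        refine (Finset.sum_subset (Finset.subset_univ S) ?_).symm
        intro i _ hi
        simp [hi]
      rw [h1, ← sum_orderIsoOfFin' S, ← hsum]
      refine Finset.sum_congr rfl ?_
      intro j _
      rw [dif_pos (e j).2]
      exact congrArg b (e.symm_apply_apply j)
    · ext i
      simp only [Finset.mem_filter, Finset.mem_univ, true_and]
      constructor
      · intro hi
        by_contra hiS
        simp [hiS] at hi
      · intro hi
        rw [dif_pos hi]
        have := hpos (e.symm ⟨i, hi⟩)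
        omega
  · -- left inverse
    intro c hc
    simp only [Finset.mem_filter, Finset.mem_piAntidiag] at hc
    obtain ⟨-, hsupp⟩ := hc
    funext i
    dsimp only
    by_cases hi : i ∈ S
    · rw [dif_pos hi]
      congr 1
      have : e (e.symm ⟨i, hi⟩) = ⟨i, hi⟩ := e.apply_symm_apply _
      rw [this]
    · rw [dif_neg hi]
      by_contra h0
      have : i ∈ Finset.univ.filter (fun i => c i ≠ 0) := by simp [Ne.symm h0]
      rw [hsupp] at this
      exact hi this
  · -- right inverse
    intro b hb
    funext j
    dsimp only
    rw [dif_pos (e j).2]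
    exact congrArg b (e.symm_apply_apply j)
  · -- value
    intro c hc
    simp only [Finset.mem_filter, Finset.mem_piAntidiag] at hc
    obtain ⟨-, hsupp⟩ := hc
    exact multinomial_support_subset (fun i => 2 * c i) S (fun i hi => by
      have hci : c i ≠ 0 := fun h => hi (by simp [h])
      rw [← hsupp]; simp [hci])

lemma Ccoef_eq_zero {m α : ℕ} (h : m < α) : Ccoef m α = 0 := by
  have hempty : (Finset.Nat.antidiagonalTuple α m).filter (fun c => ∀ i, 1 ≤ c i) = ∅ := by
    rw [Finset.filter_eq_empty_iff]
    intro c hc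
    rw [Finset.Nat.mem_antidiagonalTuple] at hc
    intro hall
    have h1 : α ≤ m := by
      calc α = ∑ _i : Fin α, 1 := by simp
        _ ≤ ∑ i, c i := Finset.sum_le_sum (fun i _ => hall i)
        _ = m := hc
    omega
  rw [Ccoef, hempty, Finset.sum_empty]

lemma hpoly_powerset {k : ℕ} (m : ℕ) (hmk : m ≤ k) (μ : Fin k → ℝ) :
    Hpoly k m μ
      = ∑ S ∈ (Finset.univ : Finset (Fin k)).powerset, (Ccoef m S.card : ℝ) * ∏ i ∈ S, μ i := by
  have h1 : Hpoly k m μ = ∑ α ∈ Finset.range (k + 1), ∑ S ∈ Finset.univ.powersetCard α,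
      (Ccoef m α : ℝ) * ∏ i ∈ S, μ i := by
    rw [Hpoly]
    refine Finset.sum_subset (Finset.range_subset_range.2 (by omega)) ?_
    intro α hα hαm
    simp only [Finset.mem_range] at hα hαm
    have : m < α := by omega
    rw [Ccoef_eq_zero this]
    simp
  rw [h1, Finset.sum_powerset]
  have hcard : ((Finset.univ : Finset (Fin k)).card) = k := by simp
  rw [hcard]
  refine Finset.sum_congr rfl ?_
  intro α _
  refine Finset.sum_congr rfl ?_
  intro S hS
  rw [(Finset.mem_powersetCard.1 hS).2]

lemma integrable_bdd_one (f : ℝ → ℝ) (hm : Measurable f) (hb : ∀ x, |f x| ≤ 1) :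
    Integrable f mu01 :=
  (integrable_const (1:ℝ)).mono' hm.aestronglyMeasurable
    (Filter.Eventually.of_forall fun x => by simpa [Real.norm_eq_abs] using hb x)

lemma integral_prod_indep {k : ℕ} (G : Fin k → ℝ → ℝ)
    (hmeas : ∀ i, Measurable (G i)) (hbdd : ∀ i x, |G i x| ≤ 1)
    (hindep : iIndepFun G mu01) (s : Finset (Fin k)) :
    ∫ x, ∏ i ∈ s, G i x ∂mu01 = ∏ i ∈ s, ∫ x, G i x ∂mu01 := by
  induction s using Finset.cons_induction with
  | empty => simp
  | cons a s ha ih =>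
    have hPmeas : Measurable (fun x => ∏ i ∈ s, G i x) := by
      exact Finset.measurable_prod s (fun i _ => hmeas i)
    have hPbdd : ∀ x, |∏ i ∈ s, G i x| ≤ 1 := by
      intro x
      rw [Finset.abs_prod]
      exact Finset.prod_le_one (fun i _ => abs_nonneg _) (fun i _ => hbdd i x)
    have hip : IndepFun (G a) (∏ j ∈ s, G j) mu01 :=
      (hindep.indepFun_finsetProd_of_notMem hmeas ha).symm
    have key := hip.integral_mul_eq_mul_integral
      (integrable_bdd_one (G a) (hmeas a) (hbdd a)).aestronglyMeasurable
      (Integrable.aestronglyMeasurable <| by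
        have : (∏ j ∈ s, G j) = fun x => ∏ i ∈ s, G i x := by
          funext x; exact Finset.prod_apply x s G
        rw [this]
        exact integrable_bdd_one _ hPmeas hPbdd)
    have hfun : (G a * ∏ j ∈ s, G j) = fun x => ∏ i ∈ Finset.cons a s ha, G i x := by
      funext x
      rw [Finset.prod_cons]
      simp [Finset.prod_apply]
    rw [hfun] at key
    rw [key, Finset.prod_cons, ← ih]
    congr 1
    have : (∏ j ∈ s, G j) = fun x => ∏ i ∈ s, G i x := by
      funext x; exact Finset.prod_apply x s G
    rw [this]

lemma moment_odd (f : ℝ → ℝ) (hm : Measurable f)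
    (hsymm : mu01.map f = mu01.map (fun x => - f x)) (d : ℕ) (hd : ¬ 2 ∣ d) :
    ∫ x, f x ^ d ∂mu01 = 0 := by
  have hodd : Odd d := Nat.odd_iff.2 (Nat.two_dvd_ne_zero.mp hd)
  have hpm : Measurable (fun y : ℝ => y ^ d) := measurable_id.pow_const d
  have h1 : ∫ x, f x ^ d ∂mu01 = ∫ y, y ^ d ∂(mu01.map f) :=
    (integral_map hm.aemeasurable hpm.aestronglyMeasurable).symm
  have h2 : ∫ y, y ^ d ∂(mu01.map (fun x => - f x)) = ∫ x, (- f x) ^ d ∂mu01 :=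
    integral_map hm.neg.aemeasurable hpm.aestronglyMeasurable
  have h3 : ∫ x, (- f x) ^ d ∂mu01 = - ∫ x, f x ^ d ∂mu01 := by
    rw [← integral_neg]
    congr 1
    funext x
    exact hodd.neg_pow (f x)
  have h5 := h1
  rw [hsymm] at h5
  linarith [h5, h2, h3]

lemma moment_even (f : ℝ → ℝ) (hval : ∀ x, f x ∈ ({-1, 0, 1} : Set ℝ)) (d : ℕ)
    (h2 : 2 ∣ d) (h0 : d ≠ 0) :
    ∫ x, f x ^ d ∂mu01 = ∫ x, |f x| ∂mu01 := by
  congr 1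
  funext x
  obtain ⟨t, rfl⟩ := h2
  have he : Even (2 * t) := ⟨t, by ring⟩
  have h0' : 2 * t ≠ 0 := h0
  rcases hval x with h | h | h
  · rw [h]; rw [he.neg_one_pow]; norm_num
  · rw [h]; rw [zero_pow h0']; simp
  · rw [h]; simp

/-- **Lemma `normh`.** If `g₁, …, g_k` are independent symmetric `{-1,0,1}`-valued random
variables with `∫ |gᵢ| = μᵢ` and `h = ∑ᵢ gᵢ`, then `‖h‖_{2m}^{2m} = H_m(μ₁, …, μ_k)` for
every `1 ≤ m ≤ k`. -/
theorem norm_sum_three_valued (k : ℕ) (hk : 1 ≤ k)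
    (μvec : Fin k → ℝ) (g : Fin k → ℝ → ℝ)
    (hmeas : ∀ i, Measurable (g i))
    (hval : ∀ i x, g i x ∈ ({-1, 0, 1} : Set ℝ))
    (hindep : iIndepFun g mu01)
    (hsymm : ∀ i, mu01.map (g i) = mu01.map (fun x => - g i x))
    (habs : ∀ i, ∫ x, |g i x| ∂mu01 = μvec i)
    (m : ℕ) (hm1 : 1 ≤ m) (hmk : m ≤ k) :
    ∫ x, (∑ i, g i x) ^ (2 * m) ∂mu01 = Hpoly k m μvec := by
  classical
  have hb : ∀ i x, |g i x| ≤ 1 := by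
    intro i x; rcases hval i x with h | h | h <;> rw [h] <;> norm_num
  set I : Fin k → ℕ → ℝ := fun i e => ∫ x, g i x ^ e ∂mu01 with hI
  have hGmeas : ∀ (d : Fin k → ℕ) (i : Fin k), Measurable (fun x => g i x ^ d i) :=
    fun d i => (hmeas i).pow_const (d i)
  have hGbdd : ∀ (d : Fin k → ℕ) (i : Fin k) (x : ℝ), |g i x ^ d i| ≤ 1 := by
    intro d i x
    rw [abs_pow]
    exact pow_le_one₀ (abs_nonneg _) (hb i x)
  have hint : ∀ d : Fin k → ℕ,
      Integrable (fun x => (Nat.multinomial Finset.univ d : ℝ) * ∏ i, g i x ^ d i) mu01 := by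
    intro d
    apply Integrable.const_mul
    apply integrable_bdd_one
    · exact Finset.measurable_prod _ (fun i _ => hGmeas d i)
    · intro x
      rw [Finset.abs_prod]
      exact Finset.prod_le_one (fun i _ => abs_nonneg _) (fun i _ => hGbdd d i x)
  -- Step 1: expand the power and factor by independence
  have step1 : ∫ x, (∑ i, g i x) ^ (2 * m) ∂mu01
      = ∑ d ∈ Finset.piAntidiag (Finset.univ : Finset (Fin k)) (2 * m),
          (Nat.multinomial Finset.univ d : ℝ) * ∏ i, I i (d i) := by
    have e0 : (fun x => (∑ i, g i x) ^ (2 * m))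
        = fun x => ∑ d ∈ Finset.piAntidiag (Finset.univ : Finset (Fin k)) (2 * m),
            (Nat.multinomial Finset.univ d : ℝ) * ∏ i, g i x ^ d i := by
      funext x
      exact Finset.sum_pow_eq_sum_piAntidiag Finset.univ (fun i => g i x) (2 * m)
    rw [e0, integral_finset_sum _ (fun d _ => hint d)]
    refine Finset.sum_congr rfl ?_
    intro d _
    rw [integral_const_mul]
    congr 1
    have hindep' : iIndepFun (fun i => fun x => g i x ^ d i) mu01 := by
      have := hindep.comp (fun i => (· ^ d i)) (fun i => measurable_id.pow_const (d i))
      exact this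
    exact integral_prod_indep _ (hGmeas d) (hGbdd d) hindep' Finset.univ
  -- Step 2: restrict to even exponents
  have hzero : ∀ d ∈ Finset.piAntidiag (Finset.univ : Finset (Fin k)) (2 * m),
      ((Nat.multinomial Finset.univ d : ℝ) * ∏ i, I i (d i)) ≠ 0 → (∀ i, 2 ∣ d i) := by
    intro d _ hne
    by_contra hcon
    push_neg at hcon
    obtain ⟨i, hi⟩ := hcon
    apply hne
    have hIz : I i (d i) = 0 := moment_odd (g i) (hmeas i) (hsymm i) (d i) hi
    rw [Finset.prod_eq_zero (Finset.mem_univ i) hIz, mul_zero]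
  have step2 : ∑ d ∈ Finset.piAntidiag (Finset.univ : Finset (Fin k)) (2 * m),
      (Nat.multinomial Finset.univ d : ℝ) * ∏ i, I i (d i)
      = ∑ c ∈ Finset.piAntidiag (Finset.univ : Finset (Fin k)) m,
          (Nat.multinomial Finset.univ (fun i => 2 * c i) : ℝ) * ∏ i, I i (2 * c i) := by
    rw [← Finset.sum_filter_of_ne hzero]
    refine Finset.sum_nbij' (fun d => fun i => d i / 2) (fun c => fun i => 2 * c i)
      ?_ ?_ ?_ ?_ ?_
    · intro d hd
      simp only [Finset.mem_filter, Finset.mem_piAntidiag] at hd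
      have hsum : ∑ i : Fin k, d i = 2 * m := hd.1.1
      have hdvd : ∀ i : Fin k, 2 ∣ d i := hd.2
      simp only [Finset.mem_piAntidiag]
      refine ⟨?_, by simp⟩
      have h1 : ∀ i : Fin k, d i = 2 * (d i / 2) := fun i => (Nat.mul_div_cancel' (hdvd i)).symm
      have h2 : ∑ i : Fin k, d i = 2 * ∑ i : Fin k, (d i / 2) := by
        rw [Finset.mul_sum]
        exact Finset.sum_congr rfl (fun i _ => h1 i)
      show ∑ i : Fin k, d i / 2 = m
      omega
    · intro c hc
      simp only [Finset.mem_piAntidiag] at hc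
      obtain ⟨hsum, -⟩ := hc
      simp only [Finset.mem_filter, Finset.mem_piAntidiag]
      exact ⟨⟨by rw [← Finset.mul_sum, hsum], by simp⟩, fun i => Dvd.intro _ rfl⟩
    · intro d hd
      simp only [Finset.mem_filter, Finset.mem_piAntidiag] at hd
      obtain ⟨-, hdvd⟩ := hd
      funext i
      exact Nat.mul_div_cancel' (hdvd i)
    · intro c _
      funext i
      exact Nat.mul_div_cancel_left _ (by norm_num)
    · intro d hd
      simp only [Finset.mem_filter, Finset.mem_piAntidiag] at hd
      obtain ⟨-, hdvd⟩ := hd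
      have h2 : ∀ i : Fin k, 2 * (d i / 2) = d i := fun i => Nat.mul_div_cancel' (hdvd i)
      simp only [h2]
  -- Step 3: evaluate the even moments
  have step3 : ∀ c : Fin k → ℕ, (∏ i, I i (2 * c i))
      = ∏ i ∈ Finset.univ.filter (fun i => c i ≠ 0), μvec i := by
    intro c
    rw [Finset.prod_filter]
    refine Finset.prod_congr rfl ?_
    intro i _
    by_cases hc : c i = 0
    · simp only [hc, if_neg (by simp : ¬ (0 : ℕ) ≠ 0)]
      simp [hI, hc]
    · rw [if_pos hc]
      have := moment_even (g i) (hval i) (2 * c i) ⟨c i, rfl⟩ (by omega)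
      rw [hI]
      dsimp only
      rw [this, habs i]
  -- Step 4: group by support
  have step4 : ∑ c ∈ Finset.piAntidiag (Finset.univ : Finset (Fin k)) m,
      (Nat.multinomial Finset.univ (fun i => 2 * c i) : ℝ) * ∏ i, I i (2 * c i)
      = ∑ S ∈ (Finset.univ : Finset (Fin k)).powerset,
          (Ccoef m S.card : ℝ) * ∏ i ∈ S, μvec i := by
    rw [← Finset.sum_fiberwise_of_maps_to
      (g := fun c : Fin k → ℕ => Finset.univ.filter (fun i => c i ≠ 0))
      (t := (Finset.univ : Finset (Fin k)).powerset)
      (fun c _ => Finset.mem_powerset.2 (Finset.filter_subset _ _))]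
    refine Finset.sum_congr rfl ?_
    intro S _
    have inner : ∀ c ∈ (Finset.piAntidiag (Finset.univ : Finset (Fin k)) m).filter
        (fun c => Finset.univ.filter (fun i => c i ≠ 0) = S),
        (Nat.multinomial Finset.univ (fun i => 2 * c i) : ℝ) * ∏ i, I i (2 * c i)
        = (Nat.multinomial Finset.univ (fun i => 2 * c i) : ℝ) * ∏ i ∈ S, μvec i := by
      intro c hc
      have hS := (Finset.mem_filter.1 hc).2
      rw [step3 c, hS]
    rw [Finset.sum_congr rfl inner, ← Finset.sum_mul]
    congr 1
    rw [← coeff_fiber m S]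
    push_cast
    rfl
  rw [step1, step2, step4, hpoly_powerset m hmk μvec]
end

section
/- Let $k \ge 1$ and for $j \in \mathbb{N}$ let $F^{(j)} : \mathbb{R}^{k+1} \to \mathbb{R}^k$ be the map with components $F^{(j)}_m$, $m = 1, \dots, k$. If $\mu_1 > \mu_2 > \cdots > \mu_k > 0$, then for every $j \in \mathbb{N}$ the derivative (Jacobian matrix) of $F^{(j)}$ at the point $(\mu_1, \dots, \mu_k, 0)$ has rank $k$, i.e., is surjective as a linear map $\mathbb{R}^{k+1} \to \mathbb{R}^k$. -/
open Finset

/-- `F^{(j)}_m(μ₁,…,μ_k, ν) = H_m(μ) + ν ∑_{l=1}^m (2m choose 2l) j^{2l} H_{m-l}(μ)`. -/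
def Fpoly (k j m : ℕ) (μ : Fin k → ℝ) (ν : ℝ) : ℝ :=
  Hpoly k m μ +
    ν * ∑ l ∈ Finset.Icc 1 m, ((2 * m).choose (2 * l) : ℝ) * (j : ℝ) ^ (2 * l) *
      Hpoly k (m - l) μ

/-- The map `F^{(j)} : ℝ^{k+1} → ℝ^k` with components `F^{(j)}_m`, `m = 1, …, k`. -/
def Fmap (k j : ℕ) : (Fin k → ℝ) × ℝ → (Fin k → ℝ) :=
  fun z m => Fpoly k j (m.1 + 1) z.1 z.2

/-- elementary symmetric polynomial of a finset of variables -/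
noncomputable def Esym (k : ℕ) (s : Finset (Fin k)) (n : ℕ) (μ : Fin k → ℝ) : ℝ :=
  ∑ t ∈ s.powersetCard n, ∏ i ∈ t, μ i

/-- Fréchet derivative of `Hpoly k m` at `μ`. -/
noncomputable def dH (k m : ℕ) (μ : Fin k → ℝ) : (Fin k → ℝ) →L[ℝ] ℝ :=
  ∑ α ∈ Finset.range (m + 1), ∑ S ∈ Finset.univ.powersetCard α,
    (Ccoef m α : ℝ) • ∑ i ∈ S, (∏ j ∈ S.erase i, μ j) • ContinuousLinearMap.proj i

lemma hasFDerivAt_Hpoly (k m : ℕ) (μ : Fin k → ℝ) :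
    HasFDerivAt (fun ν => Hpoly k m ν) (dH k m μ) μ := by
  unfold Hpoly dH
  apply HasFDerivAt.fun_sum; intro α _
  apply HasFDerivAt.fun_sum; intro S _
  exact (HasFDerivAt.finset_prod (fun i _ => hasFDerivAt_apply i μ)).const_mul _

lemma Esym_zero (k : ℕ) (s : Finset (Fin k)) (μ : Fin k → ℝ) : Esym k s 0 μ = 1 := by
  simp [Esym]

lemma Esym_split (k : ℕ) (i : Fin k) (n : ℕ) (μ : Fin k → ℝ) :
    Esym k Finset.univ (n + 1) μ =
      Esym k (Finset.univ.erase i) (n + 1) μ + μ i * Esym k (Finset.univ.erase i) n μ := by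
  unfold Esym
  have h : (Finset.univ : Finset (Fin k)) = insert i (Finset.univ.erase i) := by
    rw [Finset.insert_erase (Finset.mem_univ i)]
  conv_lhs => rw [h]
  rw [Finset.powersetCard_succ_insert (Finset.notMem_erase i _)]
  rw [Finset.sum_union]
  · congr 1
    rw [Finset.sum_image]
    · rw [Finset.mul_sum]
      apply Finset.sum_congr rfl
      intro t ht
      have hit : i ∉ t := fun hin => Finset.notMem_erase i _ ((Finset.mem_powersetCard.1 ht).1 hin)
      rw [Finset.prod_insert hit]
    · intro t ht t' ht' hE
      have hit : i ∉ t := fun hin => Finset.notMem_erase i _ ((Finset.mem_powersetCard.1 ht).1 hin)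
      have hit' : i ∉ t' := fun hin => Finset.notMem_erase i _ ((Finset.mem_powersetCard.1 ht').1 hin)
      rw [← Finset.erase_insert hit, ← Finset.erase_insert hit', hE]
  · rw [Finset.disjoint_left]
    intro t ht ht'
    have hit : i ∉ t := fun hin => Finset.notMem_erase i _ ((Finset.mem_powersetCard.1 ht).1 hin)
    obtain ⟨t', -, rfl⟩ := Finset.mem_image.1 ht'
    exact hit (Finset.mem_insert_self i t')

lemma Esym_erase (k : ℕ) (i : Fin k) (μ : Fin k → ℝ) (n : ℕ) :
    Esym k (Finset.univ.erase i) n μ =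
      ∑ s ∈ Finset.range (n + 1), (-1 : ℝ) ^ s * μ i ^ s * Esym k Finset.univ (n - s) μ := by
  induction n with
  | zero => simp [Esym]
  | succ n ih =>
    have hs := Esym_split k i n μ
    have : Esym k (Finset.univ.erase i) (n + 1) μ =
        Esym k Finset.univ (n + 1) μ - μ i * Esym k (Finset.univ.erase i) n μ := by
      linarith
    rw [this, ih,
      Finset.sum_range_succ' (fun s => (-1 : ℝ) ^ s * μ i ^ s * Esym k Finset.univ (n + 1 - s) μ)
        (n + 1)]
    have h0 : (-1 : ℝ) ^ 0 * μ i ^ 0 * Esym k Finset.univ (n + 1 - 0) μ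
        = Esym k Finset.univ (n + 1) μ := by norm_num
    rw [h0, Finset.mul_sum]
    have hterm : ∀ s ∈ Finset.range (n + 1),
        (-1 : ℝ) ^ (s + 1) * μ i ^ (s + 1) * Esym k Finset.univ (n + 1 - (s + 1)) μ
          = -(μ i * ((-1 : ℝ) ^ s * μ i ^ s * Esym k Finset.univ (n - s) μ)) := by
      intro s _
      have hn : n + 1 - (s + 1) = n - s := by omega
      rw [hn]; ring
    rw [Finset.sum_congr rfl hterm, Finset.sum_neg_distrib]
    ring

lemma swap_sum (k α : ℕ) (g : Fin k → Finset (Fin k) → ℝ) :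
    ∑ S ∈ (Finset.univ : Finset (Fin k)).powersetCard (α + 1), ∑ i ∈ S, g i (S.erase i)
      = ∑ i : Fin k, ∑ t ∈ (Finset.univ.erase i).powersetCard α, g i t := by
  rw [Finset.sum_sigma', Finset.sum_sigma']
  apply Finset.sum_nbij' (i := fun p : Σ _ : Finset (Fin k), Fin k => (⟨p.2, p.1.erase p.2⟩ : Σ _ : Fin k, Finset (Fin k)))
    (j := fun p : Σ _ : Fin k, Finset (Fin k) => (⟨insert p.1 p.2, p.1⟩ : Σ _ : Finset (Fin k), Fin k))
  · rintro ⟨S, i⟩ hp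
    simp only [Finset.mem_sigma] at hp ⊢
    obtain ⟨hS, hi⟩ := hp
    obtain ⟨hsub, hcard⟩ := Finset.mem_powersetCard.1 hS
    refine ⟨Finset.mem_univ _, Finset.mem_powersetCard.2 ⟨?_, ?_⟩⟩
    · exact Finset.erase_subset_erase i hsub
    · rw [Finset.card_erase_of_mem hi, hcard]
      omega
  · rintro ⟨i, t⟩ hp
    simp only [Finset.mem_sigma] at hp ⊢
    obtain ⟨-, ht⟩ := hp
    obtain ⟨hsub, hcard⟩ := Finset.mem_powersetCard.1 ht
    have hit : i ∉ t := fun hin => Finset.notMem_erase i _ (hsub hin)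
    refine ⟨Finset.mem_powersetCard.2 ⟨Finset.subset_univ _, ?_⟩, Finset.mem_insert_self i t⟩
    rw [Finset.card_insert_of_notMem hit, hcard]
  · rintro ⟨S, i⟩ hp
    simp only [Finset.mem_sigma] at hp
    have : insert i (S.erase i) = S := Finset.insert_erase hp.2
    simp [this]
  · rintro ⟨i, t⟩ hp
    simp only [Finset.mem_sigma] at hp
    have hit : i ∉ t := fun hin =>
      Finset.notMem_erase i _ ((Finset.mem_powersetCard.1 hp.2).1 hin)
    have : (insert i t).erase i = t := Finset.erase_insert hit
    simp [this]
  · rintro ⟨S, i⟩ _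
    rfl

lemma dH_apply (k m : ℕ) (μ δ : Fin k → ℝ) :
    dH k m μ δ = ∑ β ∈ Finset.range m, (Ccoef m (β + 1) : ℝ) *
      ∑ i : Fin k, δ i * Esym k (Finset.univ.erase i) β μ := by
  have h1 : dH k m μ δ = ∑ α ∈ Finset.range (m + 1), (Ccoef m α : ℝ) *
      ∑ S ∈ Finset.univ.powersetCard α, ∑ i ∈ S, (∏ j ∈ S.erase i, μ j) * δ i := by
    simp [dH, ContinuousLinearMap.sum_apply, ContinuousLinearMap.smul_apply,
      ContinuousLinearMap.proj_apply, Finset.mul_sum, smul_eq_mul]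
  rw [h1, Finset.sum_range_succ' (fun α => (Ccoef m α : ℝ) *
      ∑ S ∈ Finset.univ.powersetCard α, ∑ i ∈ S, (∏ j ∈ S.erase i, μ j) * δ i) m]
  have h0 : (Ccoef m 0 : ℝ) *
      ∑ S ∈ (Finset.univ : Finset (Fin k)).powersetCard 0, ∑ i ∈ S, (∏ j ∈ S.erase i, μ j) * δ i
        = 0 := by
    simp
  rw [h0, add_zero]
  apply Finset.sum_congr rfl
  intro β _
  congr 1
  rw [swap_sum k β (fun i t => (∏ j ∈ t, μ j) * δ i)]
  apply Finset.sum_congr rfl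
  intro i _
  rw [Esym, Finset.mul_sum]
  apply Finset.sum_congr rfl
  intro t _
  ring

lemma Ccoef_diag_pos (m : ℕ) : 0 < Ccoef m m := by
  apply Finset.sum_pos
  · intro c _
    exact Nat.multinomial_pos _ _
  · refine ⟨fun _ => 1, ?_⟩
    rw [Finset.mem_filter]
    refine ⟨Finset.Nat.mem_antidiagonalTuple.2 ?_, fun i => le_refl 1⟩
    simp

lemma delta_zero (k : ℕ) (μ : Fin k → ℝ)
    (hdec : ∀ i i' : Fin k, i < i' → μ i' < μ i)
    (δ : Fin k → ℝ) (h : ∀ m : Fin k, dH k (m.1 + 1) μ δ = 0) : δ = 0 := by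
  have hu : ∀ β, β < k → ∑ i : Fin k, δ i * Esym k (Finset.univ.erase i) β μ = 0 := by
    intro β
    induction β using Nat.strong_induction_on with
    | _ β ih =>
      intro hβ
      have h0 := h ⟨β, hβ⟩
      rw [dH_apply] at h0
      rw [Finset.sum_range_succ] at h0
      have hz : ∑ β' ∈ Finset.range β, (Ccoef (β + 1) (β' + 1) : ℝ) *
          ∑ i : Fin k, δ i * Esym k (Finset.univ.erase i) β' μ = 0 :=
        Finset.sum_eq_zero fun β' hβ' => by
          rw [ih β' (Finset.mem_range.1 hβ') (lt_trans (Finset.mem_range.1 hβ') hβ), mul_zero]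
      rw [hz, zero_add] at h0
      have hC : ((Ccoef (β + 1) (β + 1) : ℝ)) ≠ 0 := by
        exact_mod_cast (Ccoef_diag_pos (β + 1)).ne'
      exact (mul_eq_zero.1 h0).resolve_left hC
  have hv : ∀ s, s < k → ∑ i : Fin k, δ i * μ i ^ s = 0 := by
    intro s
    induction s using Nat.strong_induction_on with
    | _ s ih =>
      intro hs
      have h1 := hu s hs
      have h2 : ∑ i : Fin k, δ i * Esym k (Finset.univ.erase i) s μ
          = ∑ s' ∈ Finset.range (s + 1),
              (-1 : ℝ) ^ s' * Esym k Finset.univ (s - s') μ * ∑ i : Fin k, δ i * μ i ^ s' := by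
        simp only [Esym_erase, Finset.mul_sum]
        rw [Finset.sum_comm]
        apply Finset.sum_congr rfl
        intro s' _
        apply Finset.sum_congr rfl
        intro i _
        ring
      rw [h2, Finset.sum_range_succ] at h1
      have hz : ∑ s' ∈ Finset.range s,
          (-1 : ℝ) ^ s' * Esym k Finset.univ (s - s') μ * ∑ i : Fin k, δ i * μ i ^ s' = 0 :=
        Finset.sum_eq_zero fun s' hs' => by
          rw [ih s' (Finset.mem_range.1 hs') (lt_trans (Finset.mem_range.1 hs') hs), mul_zero]
      rw [hz, zero_add, Nat.sub_self, Esym_zero, mul_one] at h1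
      have hne : ((-1 : ℝ) ^ s) ≠ 0 := pow_ne_zero s (by norm_num)
      exact (mul_eq_zero.1 h1).resolve_left hne
  have hinj : Function.Injective (Matrix.vandermonde μ).transpose.mulVec := by
    rw [Matrix.mulVec_injective_iff_isUnit, Matrix.isUnit_iff_isUnit_det, Matrix.det_transpose,
      Matrix.det_vandermonde, isUnit_iff_ne_zero]
    apply Finset.prod_ne_zero_iff.2
    intro i _
    apply Finset.prod_ne_zero_iff.2
    intro i' hi'
    have hlt := hdec i i' (Finset.mem_Ioi.1 hi')
    intro hzero
    have : μ i' = μ i := sub_eq_zero.1 hzero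
    linarith
  have h0 : (Matrix.vandermonde μ).transpose.mulVec δ = (Matrix.vandermonde μ).transpose.mulVec 0 := by
    funext s
    rw [Matrix.mulVec_zero]
    have := hv s.1 s.2
    simp only [Matrix.mulVec, dotProduct, Matrix.transpose_apply, Matrix.vandermonde,
      Matrix.of_apply, Pi.zero_apply]
    rw [← this]
    apply Finset.sum_congr rfl
    intro i _
    ring
  exact hinj h0

/-- **Lemma `rank`.** If `μ₁ > μ₂ > ⋯ > μ_k > 0`, then for every `j` the derivative of
`F^{(j)} : ℝ^{k+1} → ℝ^k` at the point `(μ₁, …, μ_k, 0)` has rank `k`, i.e. it is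
surjective as a linear map `ℝ^{k+1} → ℝ^k`. -/
theorem rank_Fmap_at_nu_zero (k : ℕ) (hk : 1 ≤ k) (j : ℕ) (hj : 1 ≤ j)
    (μ : Fin k → ℝ)
    (hdec : ∀ i i' : Fin k, i < i' → μ i' < μ i) (hpos : ∀ i, 0 < μ i) :
    ∃ D : ((Fin k → ℝ) × ℝ) →L[ℝ] (Fin k → ℝ),
      HasFDerivAt (Fmap k j) D (μ, 0) ∧ Function.Surjective D := by
  classical
  refine ⟨ContinuousLinearMap.pi (fun m : Fin k =>
    (dH k (m.1 + 1) μ).comp (ContinuousLinearMap.fst ℝ (Fin k → ℝ) ℝ) +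
      (∑ l ∈ Finset.Icc 1 (m.1 + 1), ((2 * (m.1 + 1)).choose (2 * l) : ℝ) * (j : ℝ) ^ (2 * l) *
          Hpoly k (m.1 + 1 - l) μ) • (ContinuousLinearMap.snd ℝ (Fin k → ℝ) ℝ)), ?_, ?_⟩
  · apply hasFDerivAt_pi'.2
    intro m
    rw [ContinuousLinearMap.proj_pi]
    have h1 : HasFDerivAt (fun z : (Fin k → ℝ) × ℝ => Hpoly k (m.1 + 1) z.1)
        ((dH k (m.1 + 1) μ).comp (ContinuousLinearMap.fst ℝ (Fin k → ℝ) ℝ)) (μ, 0) :=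
      (hasFDerivAt_Hpoly k (m.1 + 1) μ).comp (f := Prod.fst) (μ, (0:ℝ)) hasFDerivAt_fst
    have hg : HasFDerivAt (fun ν : Fin k → ℝ => ∑ l ∈ Finset.Icc 1 (m.1 + 1),
        ((2 * (m.1 + 1)).choose (2 * l) : ℝ) * (j : ℝ) ^ (2 * l) * Hpoly k (m.1 + 1 - l) ν)
        (∑ l ∈ Finset.Icc 1 (m.1 + 1),
          (((2 * (m.1 + 1)).choose (2 * l) : ℝ) * (j : ℝ) ^ (2 * l)) •
            dH k (m.1 + 1 - l) μ) μ := by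
      apply HasFDerivAt.fun_sum
      intro l _
      have := (hasFDerivAt_Hpoly k (m.1 + 1 - l) μ).const_mul
        (((2 * (m.1 + 1)).choose (2 * l) : ℝ) * (j : ℝ) ^ (2 * l))
      simpa [mul_assoc] using this
    have h2 := (hasFDerivAt_snd (E := (Fin k → ℝ)) (F := ℝ) (p := (μ, (0:ℝ)))).mul
      (hg.comp (f := Prod.fst) ((μ, (0:ℝ))) hasFDerivAt_fst)
    have h3 := h1.add h2
    simp only [zero_smul, zero_add] at h3
    exact h3
  · have hLinj : Function.Injective
        (LinearMap.pi (fun m : Fin k => ((dH k (m.1 + 1) μ) : (Fin k → ℝ) →ₗ[ℝ] ℝ)) :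
          (Fin k → ℝ) →ₗ[ℝ] (Fin k → ℝ)) := by
      rw [injective_iff_map_eq_zero]
      intro δ hδ
      apply delta_zero k μ hdec δ
      intro m
      have := congrFun hδ m
      simpa [LinearMap.pi_apply] using this
    have hLsurj := LinearMap.injective_iff_surjective.1 hLinj
    intro y
    obtain ⟨δ, hδ⟩ := hLsurj y
    refine ⟨(δ, 0), ?_⟩
    funext m
    have hy := congrFun hδ m
    simp only [LinearMap.pi_apply, ContinuousLinearMap.coe_coe] at hy
    simp only [ContinuousLinearMap.pi_apply, ContinuousLinearMap.add_apply,
      ContinuousLinearMap.comp_apply, ContinuousLinearMap.coe_fst', ContinuousLinearMap.coe_snd',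
      ContinuousLinearMap.smul_apply, smul_eq_mul, mul_zero, add_zero]
    exact hy
end
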